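/- For the regular pentagon, the second iterate of the Lorenz map φ₅ ∘ (x ↦ 1-x) restricted to its renormalization interval J = [e, 1-e] with e = (3-√5)/2 is again a Lorenz map; moreover there is a unique point b ∈ [e, 1/2) with (φ ∘ φ₅)²(b) = 1/2, namely b = (9-√5)/16. -/
import Mathlib


open Filter Topology

/-- The reduced slap map of the regular pentagon:
`φ₅(x) = -(1/cos(π/5))(x - 1/2) mod 1`. -/
noncomputable def phiRed5 (x : ℝ) : ℝ :=
  Int.fract (-(1 / Real.cos (Real.pi / 5)) * (x - 1 / 2))

/-- The associated centrally symmetric Lorenz map `φ₅' = φ ∘ φ₅`, `φ(x) = 1-x`. -/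
noncomputable def lorenz5 (x : ℝ) : ℝ := 1 - phiRed5 x

lemma sqrt5_sq : Real.sqrt 5 ^ 2 = 5 := Real.sq_sqrt (by norm_num)

lemma sqrt5_gt : (2 : ℝ) < Real.sqrt 5 := by
  have h := sqrt5_sq
  nlinarith [Real.sqrt_nonneg 5]

lemma sqrt5_lt : Real.sqrt 5 < 2.25 := by
  have h := sqrt5_sq
  nlinarith [Real.sqrt_nonneg 5]

lemma inv_cos5 : 1 / Real.cos (Real.pi / 5) = Real.sqrt 5 - 1 := by
  rw [Real.cos_pi_div_five]
  have h := sqrt5_sq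
  have h2 := sqrt5_gt
  field_simp
  nlinarith

lemma lorenz5_left {x : ℝ} (hx0 : 0 ≤ x) (hx1 : x ≤ 1 / 2) :
    lorenz5 x = (Real.sqrt 5 - 1) * (x - 1 / 2) + 1 := by
  have h := sqrt5_sq
  have h2 := sqrt5_gt
  have h3 := sqrt5_lt
  unfold lorenz5 phiRed5
  rw [inv_cos5, Int.fract_eq_self.2 ⟨by nlinarith, by nlinarith⟩]
  ring

lemma lorenz5_right {x : ℝ} (hx0 : 1 / 2 < x) (hx1 : x ≤ 1) :
    lorenz5 x = (Real.sqrt 5 - 1) * (x - 1 / 2) := by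
  have h := sqrt5_sq
  have h2 := sqrt5_gt
  have h3 := sqrt5_lt
  unfold lorenz5 phiRed5
  rw [inv_cos5]
  have hfl : ⌊-(Real.sqrt 5 - 1) * (x - 1 / 2)⌋ = -1 := by
    rw [Int.floor_eq_iff]
    push_cast
    constructor <;> nlinarith
  rw [Int.fract, hfl]
  push_cast
  ring

/-- Second iterate on the left of 1/2 (for `x ∈ [e', 1/2)` with some slack). -/
lemma lorenz5_sq_left {x : ℝ} (hx0 : (0.2 : ℝ) ≤ x) (hx1 : x < 1 / 2) :
    lorenz5 (lorenz5 x) = (6 - 2 * Real.sqrt 5) * (x - 1 / 2) + (Real.sqrt 5 - 1) / 2 := by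
  have h := sqrt5_sq
  have h2 := sqrt5_gt
  have h3 := sqrt5_lt
  rw [lorenz5_left (by linarith) (le_of_lt hx1)]
  rw [lorenz5_right (by nlinarith) (by nlinarith)]
  nlinarith [sq_nonneg (Real.sqrt 5 - 2)]

/-- Second iterate on the right of 1/2 (for `x ∈ (1/2, 1-e]` with some slack). -/
lemma lorenz5_sq_right {x : ℝ} (hx0 : (1 : ℝ) / 2 < x) (hx1 : x ≤ 0.8) :
    lorenz5 (lorenz5 x) = (6 - 2 * Real.sqrt 5) * (x - 1 / 2) + (3 - Real.sqrt 5) / 2 := by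
  have h := sqrt5_sq
  have h2 := sqrt5_gt
  have h3 := sqrt5_lt
  rw [lorenz5_right hx0 (by linarith)]
  rw [lorenz5_left (by nlinarith) (by nlinarith)]
  nlinarith [sq_nonneg (Real.sqrt 5 - 2)]

theorem stmt_10 :
    let e : ℝ := (3 - Real.sqrt 5) / 2
    Set.MapsTo (lorenz5 ∘ lorenz5) (Set.Icc e (1 - e) \ {1 / 2}) (Set.Icc e (1 - e)) ∧
    StrictMonoOn (lorenz5 ∘ lorenz5) (Set.Ico e (1 / 2)) ∧
    StrictMonoOn (lorenz5 ∘ lorenz5) (Set.Ioc (1 / 2) (1 - e)) ∧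
    Tendsto (lorenz5 ∘ lorenz5) (nhdsWithin (1 / 2) (Set.Iio (1 / 2))) (nhds (1 - e)) ∧
    Tendsto (lorenz5 ∘ lorenz5) (nhdsWithin (1 / 2) (Set.Ioi (1 / 2))) (nhds e) ∧
    (9 - Real.sqrt 5) / 16 ∈ Set.Ico e (1 / 2) ∧
    lorenz5 (lorenz5 ((9 - Real.sqrt 5) / 16)) = 1 / 2 ∧
    (∀ b ∈ Set.Ico e (1 / 2), lorenz5 (lorenz5 b) = 1 / 2 → b = (9 - Real.sqrt 5) / 16) := by
  intro e
  have h := sqrt5_sq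
  have h2 := sqrt5_gt
  have h3 := sqrt5_lt
  have he : e = (3 - Real.sqrt 5) / 2 := rfl
  refine ⟨?_, ?_, ?_, ?_, ?_, ⟨by rw [he]; nlinarith, by nlinarith⟩, ?_, ?_⟩
  · -- MapsTo
    rintro x ⟨⟨hx0, hx1⟩, hx2⟩
    simp only [Set.mem_singleton_iff] at hx2
    rcases lt_or_gt_of_ne hx2 with hlt | hgt
    · have := lorenz5_sq_left (x := x) (by rw [he] at hx0; nlinarith) hlt
      simp only [Function.comp_apply, this]
      rw [he] at hx0 ⊢
      constructor <;> nlinarith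
    · have := lorenz5_sq_right (x := x) hgt (by rw [he] at hx1; nlinarith)
      simp only [Function.comp_apply, this]
      rw [he] at hx1 ⊢
      constructor <;> nlinarith
  · -- strict mono left
    intro x hx y hy hxy
    obtain ⟨hx0, hx1⟩ := hx
    obtain ⟨hy0, hy1⟩ := hy
    rw [he] at hx0 hy0
    simp only [Function.comp_apply,
      lorenz5_sq_left (x := x) (by nlinarith) hx1,
      lorenz5_sq_left (x := y) (by nlinarith) hy1]
    nlinarith
  · -- strict mono right
    intro x hx y hy hxy
    obtain ⟨hx0, hx1⟩ := hx
    obtain ⟨hy0, hy1⟩ := hy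
    rw [he] at hx1 hy1
    simp only [Function.comp_apply,
      lorenz5_sq_right (x := x) hx0 (by nlinarith),
      lorenz5_sq_right (x := y) hy0 (by nlinarith)]
    nlinarith
  · -- left limit
    have hcong : ∀ x ∈ Set.Ioo (0.4 : ℝ) (1 / 2), (lorenz5 ∘ lorenz5) x
        = (6 - 2 * Real.sqrt 5) * (x - 1 / 2) + (Real.sqrt 5 - 1) / 2 := by
      intro x hx
      exact lorenz5_sq_left (by linarith [hx.1]) hx.2
    have hmem : Set.Ioo (0.4 : ℝ) (1 / 2) ∈ nhdsWithin (1 / 2 : ℝ) (Set.Iio (1 / 2)) :=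
      Ioo_mem_nhdsLT_of_mem (by norm_num)
    refine Tendsto.congr' (Filter.eventuallyEq_of_mem hmem fun x hx => (hcong x hx).symm) ?_
    have : Tendsto (fun x : ℝ => (6 - 2 * Real.sqrt 5) * (x - 1 / 2) + (Real.sqrt 5 - 1) / 2)
        (nhds (1 / 2 : ℝ)) (nhds (1 - e)) := by
      have hval : (6 - 2 * Real.sqrt 5) * ((1:ℝ) / 2 - 1 / 2) + (Real.sqrt 5 - 1) / 2 = 1 - e := by
        rw [he]; ring
      rw [← hval]
      exact Continuous.tendsto (by continuity) _
    exact this.mono_left nhdsWithin_le_nhds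
  · -- right limit
    have hcong : ∀ x ∈ Set.Ioo ((1:ℝ) / 2) 0.6, (lorenz5 ∘ lorenz5) x
        = (6 - 2 * Real.sqrt 5) * (x - 1 / 2) + (3 - Real.sqrt 5) / 2 := by
      intro x hx
      exact lorenz5_sq_right hx.1 (by linarith [hx.2])
    have hmem : Set.Ioo ((1:ℝ) / 2) 0.6 ∈ nhdsWithin (1 / 2 : ℝ) (Set.Ioi (1 / 2)) :=
      Ioo_mem_nhdsGT (by norm_num)
    refine Tendsto.congr' (Filter.eventuallyEq_of_mem hmem fun x hx => (hcong x hx).symm) ?_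
    have : Tendsto (fun x : ℝ => (6 - 2 * Real.sqrt 5) * (x - 1 / 2) + (3 - Real.sqrt 5) / 2)
        (nhds (1 / 2 : ℝ)) (nhds e) := by
      have hval : (6 - 2 * Real.sqrt 5) * ((1:ℝ) / 2 - 1 / 2) + (3 - Real.sqrt 5) / 2 = e := by
        rw [he]; ring
      rw [← hval]
      exact Continuous.tendsto (by continuity) _
    exact this.mono_left nhdsWithin_le_nhds
  · -- value at b
    rw [lorenz5_sq_left (by nlinarith) (by nlinarith)]
    nlinarith
  · -- uniqueness
    rintro b ⟨hb0, hb1⟩ hval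
    rw [he] at hb0
    rw [lorenz5_sq_left (by nlinarith) hb1] at hval
    nlinarith
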